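/- Every 3×3 singular irreducible F₀-matrix M with an irreducibility assumption and block form M = [[A, b],[cᵀ, 0]] (A a 2×2 N₀-matrix, b, c ≤ 0, cᵀA⁻¹b = 0) has entrywise nonpositive group inverse M^#. -/

import Mathlib

open Matrix

set_option maxHeartbeats 1600000


/-- Group inverse for the normalized case `M0 = [[a00,a01,b0],[a10,0,0],[c0,0,0]]`. -/
lemma stmt_6_aux (a00 a01 a10 b0 c0 : ℝ)
    (h01 : a01 < 0) (h10 : a10 < 0) (h00 : 0 ≤ a00) (hb0 : b0 < 0) (hc0 : c0 < 0)
    (M0 : Matrix (Fin 2 ⊕ Fin 1) (Fin 2 ⊕ Fin 1) ℝ)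
    (hM0 : M0 = Matrix.fromBlocks !![a00, a01; a10, 0] (fun i _ => ![b0, 0] i)
          (fun _ j => ![c0, 0] j) 0) :
    ∃ X : Matrix (Fin 2 ⊕ Fin 1) (Fin 2 ⊕ Fin 1) ℝ,
      M0 * X * M0 = M0 ∧ X * M0 * X = X ∧ M0 * X = X * M0 ∧ ∀ i j, X i j ≤ 0 := by
  subst hM0
  set s : ℝ := a01 * a10 + b0 * c0 with hs
  have hs1 : 0 < a01 * a10 := mul_pos_of_neg_of_neg h01 h10
  have hs2 : 0 < b0 * c0 := mul_pos_of_neg_of_neg hb0 hc0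
  have hspos : 0 < s := by positivity
  have hsne : s ≠ 0 := ne_of_gt hspos
  refine ⟨Matrix.fromBlocks !![0, a01/s; a10/s, -(a00*a01*a10)/s^2]
      (fun i _ => ![b0/s, -(a00*b0*a10)/s^2] i)
      (fun _ j => ![c0/s, -(a00*c0*a01)/s^2] j)
      (fun _ _ => -(a00*b0*c0)/s^2), ?_, ?_, ?_, ?_⟩
  · ext i j
    rcases i with i | i <;> rcases j with j | j <;> fin_cases i <;> fin_cases j <;>
      simp only [Matrix.mul_apply, Fintype.sum_sum_type, Fin.sum_univ_two, Fin.sum_univ_one,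
        Matrix.fromBlocks_apply₁₁, Matrix.fromBlocks_apply₁₂, Matrix.fromBlocks_apply₂₁,
        Matrix.fromBlocks_apply₂₂, Matrix.cons_val', Matrix.cons_val_zero, Matrix.cons_val_one,
        Matrix.head_cons, Matrix.head_fin_const, Matrix.of_apply, Matrix.empty_val',
        Matrix.cons_val_fin_one, Matrix.zero_apply, Fin.isValue, Matrix.fromBlocks, Sum.elim_inl, Sum.elim_inr, Fin.zero_eta, Fin.mk_one] <;>
      field_simp <;> ring
  · ext i j
    rcases i with i | i <;> rcases j with j | j <;> fin_cases i <;> fin_cases j <;>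
      simp only [Matrix.mul_apply, Fintype.sum_sum_type, Fin.sum_univ_two, Fin.sum_univ_one,
        Matrix.fromBlocks_apply₁₁, Matrix.fromBlocks_apply₁₂, Matrix.fromBlocks_apply₂₁,
        Matrix.fromBlocks_apply₂₂, Matrix.cons_val', Matrix.cons_val_zero, Matrix.cons_val_one,
        Matrix.head_cons, Matrix.head_fin_const, Matrix.of_apply, Matrix.empty_val',
        Matrix.cons_val_fin_one, Matrix.zero_apply, Fin.isValue, Matrix.fromBlocks, Sum.elim_inl, Sum.elim_inr, Fin.zero_eta, Fin.mk_one] <;>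
      field_simp <;> ring
  · ext i j
    rcases i with i | i <;> rcases j with j | j <;> fin_cases i <;> fin_cases j <;>
      simp only [Matrix.mul_apply, Fintype.sum_sum_type, Fin.sum_univ_two, Fin.sum_univ_one,
        Matrix.fromBlocks_apply₁₁, Matrix.fromBlocks_apply₁₂, Matrix.fromBlocks_apply₂₁,
        Matrix.fromBlocks_apply₂₂, Matrix.cons_val', Matrix.cons_val_zero, Matrix.cons_val_one,
        Matrix.head_cons, Matrix.head_fin_const, Matrix.of_apply, Matrix.empty_val',
        Matrix.cons_val_fin_one, Matrix.zero_apply, Fin.isValue, Matrix.fromBlocks, Sum.elim_inl, Sum.elim_inr, Fin.zero_eta, Fin.mk_one] <;>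
      field_simp <;> ring
  · intro i j
    have h1 : a01 / s ≤ 0 := div_nonpos_iff.2 (Or.inr ⟨h01.le, hspos.le⟩)
    have h2 : a10 / s ≤ 0 := div_nonpos_iff.2 (Or.inr ⟨h10.le, hspos.le⟩)
    have h3 : b0 / s ≤ 0 := div_nonpos_iff.2 (Or.inr ⟨hb0.le, hspos.le⟩)
    have h4 : c0 / s ≤ 0 := div_nonpos_iff.2 (Or.inr ⟨hc0.le, hspos.le⟩)
    have h5 : -(a00*a01*a10)/s^2 ≤ 0 := by
      apply div_nonpos_iff.2 (Or.inr ⟨by nlinarith, by positivity⟩)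
    have h6 : -(a00*b0*a10)/s^2 ≤ 0 := by
      apply div_nonpos_iff.2 (Or.inr ⟨by nlinarith [mul_pos_of_neg_of_neg hb0 h10], by positivity⟩)
    have h7 : -(a00*c0*a01)/s^2 ≤ 0 := by
      apply div_nonpos_iff.2 (Or.inr ⟨by nlinarith [mul_pos_of_neg_of_neg hc0 h01], by positivity⟩)
    have h8 : -(a00*b0*c0)/s^2 ≤ 0 := by
      apply div_nonpos_iff.2 (Or.inr ⟨by nlinarith, by positivity⟩)
    rcases i with i | i <;> rcases j with j | j <;> fin_cases i <;> fin_cases j <;>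
      simp_all [Matrix.fromBlocks]

/-- A singular irreducible 3×3 F₀-matrix `M = [[A, b],[cᵀ, 0]]` (with `A` a 2×2
N₀-matrix, `b, c ≤ 0`, `cᵀA⁻¹b = 0`) has an entrywise nonpositive group inverse. -/
theorem stmt_6 (A : Matrix (Fin 2) (Fin 2) ℝ)
    (hAZ : ∀ i j, i ≠ j → A i j ≤ 0)
    (hAinv : IsUnit A.det)
    (hAneg : ∀ i j, A⁻¹ i j ≤ 0)
    (hAirr : A 0 1 ≠ 0 ∧ A 1 0 ≠ 0)
    (b c : Fin 2 → ℝ) (hb : ∀ i, b i ≤ 0) (hc : ∀ i, c i ≤ 0)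
    (M : Matrix (Fin 2 ⊕ Fin 1) (Fin 2 ⊕ Fin 1) ℝ)
    (hM : M = Matrix.fromBlocks A (fun i _ => b i) (fun _ j => c j) 0)
    (hsing : c ⬝ᵥ (A⁻¹ *ᵥ b) = 0)
    (hirr : ∀ S : Set (Fin 2 ⊕ Fin 1), S.Nonempty → S ≠ Set.univ →
      ∃ i ∈ S, ∃ j ∉ S, M i j ≠ 0) :
    ∃ X : Matrix (Fin 2 ⊕ Fin 1) (Fin 2 ⊕ Fin 1) ℝ,
      M * X * M = M ∧ X * M * X = X ∧ M * X = X * M ∧ ∀ i j, X i j ≤ 0 := by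
  have ha01 : A 0 1 < 0 := lt_of_le_of_ne (hAZ 0 1 (by decide)) hAirr.1
  have ha10 : A 1 0 < 0 := lt_of_le_of_ne (hAZ 1 0 (by decide)) hAirr.2
  have hdne : A.det ≠ 0 := hAinv.ne_zero
  have hinv : A⁻¹ = (A.det)⁻¹ • !![A 1 1, -(A 0 1); -(A 1 0), A 0 0] := by
    rw [Matrix.inv_def, Matrix.adjugate_fin_two, Ring.inverse_eq_inv]
  have h01' : (A.det)⁻¹ * (-(A 0 1)) ≤ 0 := by
    have := hAneg 0 1; rw [hinv] at this; simpa using this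
  have hdneg : A.det < 0 := by
    rcases hdne.lt_or_gt with h | h
    · exact h
    · exfalso; have : (0:ℝ) < (A.det)⁻¹ := inv_pos.2 h; nlinarith
  have hdinv : (A.det)⁻¹ < 0 := inv_lt_zero.2 hdneg
  have ha11 : 0 ≤ A 1 1 := by
    have := hAneg 0 0; rw [hinv] at this; simp at this; nlinarith
  have ha00 : 0 ≤ A 0 0 := by
    have := hAneg 1 1; rw [hinv] at this; simp at this; nlinarith
  -- expand singularity
  rw [hinv] at hsing
  simp [dotProduct, Matrix.mulVec, Fin.sum_univ_two] at hsing
  have hkey : A.det * A.det⁻¹ = 1 := mul_inv_cancel₀ hdne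
  have hE : c 0 * (A 1 1 * b 0) + c 0 * (-(A 0 1) * b 1)
      + c 1 * (-(A 1 0) * b 0) + c 1 * (A 0 0 * b 1) = 0 := by
    linear_combination A.det * hsing - (c 0 * (A 1 1 * b 0) + c 0 * (-(A 0 1) * b 1)
      + c 1 * (-(A 1 0) * b 0) + c 1 * (A 0 0 * b 1)) * hkey
  have s1 : 0 ≤ c 0 * (A 1 1 * b 0) := by
    nlinarith [mul_nonneg ha11 (mul_nonneg_of_nonpos_of_nonpos (hc 0) (hb 0))]
  have s2 : 0 ≤ c 0 * (-(A 0 1) * b 1) := by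
    nlinarith [mul_nonneg (neg_nonneg.2 ha01.le) (mul_nonneg_of_nonpos_of_nonpos (hc 0) (hb 1))]
  have s3 : 0 ≤ c 1 * (-(A 1 0) * b 0) := by
    nlinarith [mul_nonneg (neg_nonneg.2 ha10.le) (mul_nonneg_of_nonpos_of_nonpos (hc 1) (hb 0))]
  have s4 : 0 ≤ c 1 * (A 0 0 * b 1) := by
    nlinarith [mul_nonneg ha00 (mul_nonneg_of_nonpos_of_nonpos (hc 1) (hb 1))]
  have e1 : c 0 * (A 1 1 * b 0) = 0 := by linarith
  have e2 : c 0 * (-(A 0 1) * b 1) = 0 := by linarith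
  have e3 : c 1 * (-(A 1 0) * b 0) = 0 := by linarith
  have e4 : c 1 * (A 0 0 * b 1) = 0 := by linarith
  -- b ≠ 0 and c ≠ 0 from irreducibility
  have hbne : ∃ i, b i ≠ 0 := by
    obtain ⟨i, hiS, j, hjS, hij⟩ := hirr (Set.range Sum.inl) ⟨Sum.inl 0, ⟨0, rfl⟩⟩ (by
      intro h
      have h2 : (Sum.inr 0 : Fin 2 ⊕ Fin 1) ∈ Set.range Sum.inl := h ▸ Set.mem_univ _
      obtain ⟨k, hk⟩ := h2
      exact Sum.inl_ne_inr hk)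
    obtain ⟨i', rfl⟩ := hiS
    rcases j with j' | j'
    · exact absurd ⟨j', rfl⟩ hjS
    · rw [hM] at hij
      exact ⟨i', by simpa [Matrix.fromBlocks] using hij⟩
  have hcne : ∃ j, c j ≠ 0 := by
    obtain ⟨i, hiS, j, hjS, hij⟩ := hirr {Sum.inr 0} ⟨Sum.inr 0, rfl⟩ (by
      intro h
      have h2 : (Sum.inl 0 : Fin 2 ⊕ Fin 1) ∈ ({Sum.inr 0} : Set (Fin 2 ⊕ Fin 1)) :=
        h ▸ Set.mem_univ _
      exact Sum.inl_ne_inr h2)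
    rcases i with i' | i'
    · exact absurd hiS (by simp)
    · rcases j with j' | j'
      · rw [hM] at hij
        exact ⟨j', by simpa [Subsingleton.elim i' 0, Matrix.fromBlocks] using hij⟩
      · exact absurd (by simp [Subsingleton.elim j' 0]) hjS
  rcases eq_or_lt_of_le (hb 0) with hb0 | hb0
  · -- b 0 = 0, so b 1 < 0 : the "swapped" case
    have hb1 : b 1 < 0 := by
      obtain ⟨i, hi⟩ := hbne
      fin_cases i
      · exact absurd hb0 hi
      · exact lt_of_le_of_ne (hb 1) hi
    have hc0 : c 0 = 0 := by
      have hne : (-(A 0 1) * b 1) ≠ 0 :=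
        ne_of_lt (mul_neg_of_pos_of_neg (neg_pos.2 ha01) hb1)
      exact (mul_eq_zero.1 e2).resolve_right hne
    have hc1 : c 1 < 0 := by
      obtain ⟨j, hj⟩ := hcne
      fin_cases j
      · exact absurd hc0 hj
      · exact lt_of_le_of_ne (hc 1) hj
    have ha00z : A 0 0 = 0 := by
      have h5 : A 0 0 * b 1 = 0 := (mul_eq_zero.1 e4).resolve_left (ne_of_lt hc1)
      exact (mul_eq_zero.1 h5).resolve_right (ne_of_lt hb1)
    obtain ⟨X', h1, h2, h3, h4⟩ := stmt_6_aux (A 1 1) (A 1 0) (A 0 1) (b 1) (c 1)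
      ha10 ha01 ha11 hb1 hc1 _ rfl
    let e : (Fin 2 ⊕ Fin 1) ≃ (Fin 2 ⊕ Fin 1) :=
      ⟨Sum.elim (fun i => Sum.inl (![1, 0] i)) Sum.inr,
       Sum.elim (fun i => Sum.inl (![1, 0] i)) Sum.inr, by decide, by decide⟩
    set M0 : Matrix (Fin 2 ⊕ Fin 1) (Fin 2 ⊕ Fin 1) ℝ :=
      Matrix.fromBlocks !![A 1 1, A 1 0; A 0 1, 0] (fun i _ => ![b 1, 0] i)
        (fun _ j => ![c 1, 0] j) 0 with hM0
    have hMe : M = M0.submatrix e e := by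
      rw [hM]
      ext i j
      rcases i with i | i <;> rcases j with j | j <;> fin_cases i <;> fin_cases j <;>
        simp [e, hM0, hb0.symm, hc0, ha00z, Matrix.fromBlocks]
    refine ⟨X'.submatrix e e, ?_, ?_, ?_, fun i j => h4 _ _⟩
    · rw [hMe, Matrix.submatrix_mul_equiv, Matrix.submatrix_mul_equiv, h1]
    · rw [hMe, Matrix.submatrix_mul_equiv, Matrix.submatrix_mul_equiv, h2]
    · rw [hMe, Matrix.submatrix_mul_equiv, Matrix.submatrix_mul_equiv, h3]
  · -- b 0 < 0 : the normalized case
    have hc1 : c 1 = 0 := by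
      have hne : (-(A 1 0) * b 0) ≠ 0 :=
        ne_of_lt (mul_neg_of_pos_of_neg (neg_pos.2 ha10) hb0)
      exact (mul_eq_zero.1 e3).resolve_right hne
    have hc0 : c 0 < 0 := by
      obtain ⟨j, hj⟩ := hcne
      fin_cases j
      · exact lt_of_le_of_ne (hc 0) hj
      · exact absurd hc1 hj
    have hb1 : b 1 = 0 := by
      have h5 : -(A 0 1) * b 1 = 0 := (mul_eq_zero.1 e2).resolve_left (ne_of_lt hc0)
      exact (mul_eq_zero.1 h5).resolve_left (by simpa using hAirr.1)
    have ha11z : A 1 1 = 0 := by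
      have h5 : A 1 1 * b 0 = 0 := (mul_eq_zero.1 e1).resolve_left (ne_of_lt hc0)
      exact (mul_eq_zero.1 h5).resolve_right (ne_of_lt hb0)
    exact stmt_6_aux (A 0 0) (A 0 1) (A 1 0) (b 0) (c 0) ha01 ha10 ha00 hb0 hc0 M (by
      rw [hM]
      ext i j
      rcases i with i | i <;> rcases j with j | j <;> fin_cases i <;> fin_cases j <;>
        simp [hb1, hc1, ha11z, Matrix.fromBlocks])
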